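/- Let A₁, A₂ : ℝ → ℂ be differentiable functions satisfying i A₁' = |A₂|² A₂ and i A₂' = |A₁|² A₁. Then the quantity Re(conj(A₁(t)) · A₂(t)) is constant in t. -/

import Mathlib

theorem stmt2 (A₁ A₂ A₁' A₂' : ℝ → ℂ)
    (hd₁ : ∀ t, HasDerivAt A₁ (A₁' t) t)
    (hd₂ : ∀ t, HasDerivAt A₂ (A₂' t) t)
    (hode₁ : ∀ t, Complex.I * A₁' t = (Complex.normSq (A₂ t) : ℂ) * A₂ t)
    (hode₂ : ∀ t, Complex.I * A₂' t = (Complex.normSq (A₁ t) : ℂ) * A₁ t) :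
    ∀ s t : ℝ,
      ((starRingEnd ℂ) (A₁ s) * A₂ s).re = ((starRingEnd ℂ) (A₁ t) * A₂ t).re := by
  have key : ∀ t, HasDerivAt (fun t => ((starRingEnd ℂ) (A₁ t) * A₂ t).re) 0 t := by
    intro t
    have e1 : A₁' t = -Complex.I * ((Complex.normSq (A₂ t) : ℂ) * A₂ t) := by
      linear_combination -Complex.I * hode₁ t + A₁' t * Complex.I_sq
    have e2 : A₂' t = -Complex.I * ((Complex.normSq (A₁ t) : ℂ) * A₁ t) := by
      linear_combination -Complex.I * hode₂ t + A₂' t * Complex.I_sq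
    have r1 : (A₁' t).re = Complex.normSq (A₂ t) * (A₂ t).im := by
      rw [e1]; simp
    have i1 : (A₁' t).im = -(Complex.normSq (A₂ t) * (A₂ t).re) := by
      rw [e1]; simp
    have r2 : (A₂' t).re = Complex.normSq (A₁ t) * (A₁ t).im := by
      rw [e2]; simp
    have i2 : (A₂' t).im = -(Complex.normSq (A₁ t) * (A₁ t).re) := by
      rw [e2]; simp
    have hre1 : HasDerivAt (fun t => (A₁ t).re) ((A₁' t).re) t :=
      Complex.reCLM.hasFDerivAt.comp_hasDerivAt t (hd₁ t)
    have him1 : HasDerivAt (fun t => (A₁ t).im) ((A₁' t).im) t :=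
      Complex.imCLM.hasFDerivAt.comp_hasDerivAt t (hd₁ t)
    have hre2 : HasDerivAt (fun t => (A₂ t).re) ((A₂' t).re) t :=
      Complex.reCLM.hasFDerivAt.comp_hasDerivAt t (hd₂ t)
    have him2 : HasDerivAt (fun t => (A₂ t).im) ((A₂' t).im) t :=
      Complex.imCLM.hasFDerivAt.comp_hasDerivAt t (hd₂ t)
    have h := (hre1.mul hre2).add (him1.mul him2)
    have hfun : (fun t => ((starRingEnd ℂ) (A₁ t) * A₂ t).re)
        = fun t => (A₁ t).re * (A₂ t).re + (A₁ t).im * (A₂ t).im := by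
      funext t
      simp [Complex.mul_re]
    rw [hfun]
    refine h.congr_deriv ?_
    rw [r1, i1, r2, i2]
    ring
  intro s t
  exact is_const_of_deriv_eq_zero (fun x => (key x).differentiableAt)
    (fun x => (key x).deriv) s t
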